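/- If (X,Y) ~ p(x,y) on finite alphabets with marginals p_X, p_Y, and (X'^n, Y'^n) is drawn i.i.d. from the product of marginals ∏_i p_X(x'_i)p_Y(y'_i), then for n large enough the probability that (X'^n, Y'^n) is jointly robustly ε-typical satisfies (1−δ(ε))·2^{−n(I(X;Y)+2εH(Y))} ≤ P((X'^n,Y'^n) ∈ A_ε^{(n)}(X,Y)) ≤ 2^{−n(I(X;Y)−2εH(Y))}, where δ(ε) → 0 as ε → 0. -/

import Mathlib

open Finset

section Typicality

variable {𝓧 𝓨 : Type} [Fintype 𝓧] [Fintype 𝓨] [DecidableEq 𝓧] [DecidableEq 𝓨]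
variable (p : 𝓧 → 𝓨 → ℝ)

/-- Empirical joint type of a pair of sequences. -/
noncomputable def emp (n : ℕ) (x : Fin n → 𝓧) (y : Fin n → 𝓨) (a : 𝓧) (b : 𝓨) : ℝ :=
  ((Finset.univ.filter (fun i : Fin n => x i = a ∧ y i = b)).card : ℝ) / n

/-- Robust joint ε-typicality. -/
def JointlyTypical (ε : ℝ) (n : ℕ) (x : Fin n → 𝓧) (y : Fin n → 𝓨) : Prop :=
  ∀ a b, |emp n x y a b - p a b| ≤ ε * p a b

-- Probability (under the product of the marginals) that an i.i.d. pair of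
-- sequences is jointly ε-typical.
open scoped Classical in
noncomputable def Pindep (ε : ℝ) (n : ℕ) : ℝ :=
  ∑ x : Fin n → 𝓧, ∑ y : Fin n → 𝓨,
    if JointlyTypical p ε n x y then
      ∏ i, (∑ b, p (x i) b) * (∑ a, p a (y i))
    else 0

/-- Mutual information `I(X;Y)` in bits. -/
noncomputable def MI : ℝ :=
  ∑ a, ∑ b, p a b * Real.logb 2 (p a b / ((∑ b', p a b') * (∑ a', p a' b)))

/-- Entropy `H(Y)` in bits. -/
noncomputable def HY : ℝ :=
  -∑ b, (∑ a, p a b) * Real.logb 2 (∑ a, p a b)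

/- ************ Auxiliary development ************ -/

set_option linter.unusedSectionVars false

open scoped Classical

namespace Stmt16Aux

/-- marginal of X -/
noncomputable def pX (a : 𝓧) : ℝ := ∑ b, p a b
/-- marginal of Y -/
noncomputable def pY (b : 𝓨) : ℝ := ∑ a, p a b
/-- conditional entropy H(Y|X) -/
noncomputable def Hc : ℝ := -∑ a, ∑ b, p a b * Real.logb 2 (p a b / pX p a)
/-- count of occurrences of the pair (a,b) -/
def cnt (n : ℕ) (x : Fin n → 𝓧) (y : Fin n → 𝓨) (a : 𝓧) (b : 𝓨) : ℕ :=
  (Finset.univ.filter (fun i : Fin n => x i = a ∧ y i = b)).card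
/-- probability of the typical set under the joint distribution -/
noncomputable def Pjoint (ε : ℝ) (n : ℕ) : ℝ :=
  ∑ x : Fin n → 𝓧, ∑ y : Fin n → 𝓨,
    if JointlyTypical p ε n x y then ∏ i, p (x i) (y i) else 0


/-- s1 summand -/
noncomputable def s1 (a : 𝓧) (b : 𝓨) : ℝ := p a b * Real.logb 2 (p a b / pX p a)
/-- s2 summand -/
noncomputable def s2 (a : 𝓧) (b : 𝓨) : ℝ := p a b * Real.logb 2 (pY p b)

lemma sum_s1 : ∑ a, ∑ b, s1 p a b = -Hc p := by rw [Hc]; ring_nf; rfl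

lemma sum_s2 : ∑ a, ∑ b, s2 p a b = -HY p := by
  rw [HY, neg_neg, Finset.sum_comm]
  exact Finset.sum_congr rfl fun b _ => by rw [Finset.sum_mul]; rfl

lemma sum_prod_fn {γ : Type} [Fintype γ] {n : ℕ} (f : Fin n → γ → ℝ) :
    ∑ x : Fin n → γ, ∏ i, f i (x i) = ∏ i, ∑ c, f i c := (Fintype.prod_sum f).symm

lemma expect_prod {n : ℕ} (h : Fin n → 𝓧 → 𝓨 → ℝ) :
    ∑ x : Fin n → 𝓧, ∑ y : Fin n → 𝓨, ∏ i, h i (x i) (y i)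
      = ∏ i, (∑ a, ∑ b, h i a b) := by
  have step : ∀ x : Fin n → 𝓧, ∑ y : Fin n → 𝓨, ∏ i, h i (x i) (y i)
      = ∏ i, ∑ b, h i (x i) b := fun x => sum_prod_fn (fun i b => h i (x i) b)
  rw [Finset.sum_congr rfl fun x _ => step x, sum_prod_fn (fun i a => ∑ b, h i a b)]

lemma cnt_cast {n : ℕ} (x : Fin n → 𝓧) (y : Fin n → 𝓨) (a : 𝓧) (b : 𝓨) :
    (cnt n x y a b : ℝ) = ∑ i, (if x i = a ∧ y i = b then (1:ℝ) else 0) := by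
  rw [cnt, Finset.card_filter]
  push_cast
  simp

lemma count_sum {n : ℕ} (x : Fin n → 𝓧) (y : Fin n → 𝓨) (f : 𝓧 → 𝓨 → ℝ) :
    ∑ i, f (x i) (y i) = ∑ a, ∑ b, (cnt n x y a b : ℝ) * f a b := by
  have h1 : ∀ a b, (cnt n x y a b : ℝ) * f a b
      = ∑ i, (if x i = a ∧ y i = b then f a b else 0) := by
    intro a b
    rw [cnt_cast, Finset.sum_mul]
    exact Finset.sum_congr rfl fun i _ => by split <;> simp
  have h2 : ∀ i, f (x i) (y i)
      = ∑ a, ∑ b, (if x i = a ∧ y i = b then f a b else 0) := by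
    intro i
    rw [Finset.sum_comm, Finset.sum_eq_single (y i)]
    · rw [Finset.sum_eq_single (x i)] <;> simp +contextual [eq_comm]
    · simp +contextual [eq_comm]
    · simp
  simp only [h1]
  rw [Finset.sum_congr rfl fun i (_ : i ∈ univ) => h2 i]
  rw [Finset.sum_comm]
  exact Finset.sum_congr rfl fun a _ => Finset.sum_comm ..

def eInd (a : 𝓧) (b : 𝓨) (a' : 𝓧) (b' : 𝓨) : ℝ := if a' = a ∧ b' = b then 1 else 0

lemma eInd_mul_self (a : 𝓧) (b : 𝓨) (a' : 𝓧) (b' : 𝓨) :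
    eInd a b a' b' * eInd a b a' b' = eInd a b a' b' := by
  rw [eInd]; split <;> norm_num

lemma sum_eInd (p : 𝓧 → 𝓨 → ℝ) (a : 𝓧) (b : 𝓨) :
    ∑ a', ∑ b', eInd a b a' b' * p a' b' = p a b := by
  simp [eInd, ite_and, ite_mul]

lemma S_marked (hsum : ∑ a, ∑ b, p a b = 1) {n : ℕ} (s : Finset (Fin n)) (a : 𝓧) (b : 𝓨) :
    ∑ x : Fin n → 𝓧, ∑ y : Fin n → 𝓨,
      (∏ i ∈ s, eInd a b (x i) (y i)) * ∏ j, p (x j) (y j) = (p a b) ^ s.card := by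
  set h : Fin n → 𝓧 → 𝓨 → ℝ :=
    fun j a' b' => if j ∈ s then eInd a b a' b' * p a' b' else p a' b' with hh
  have key : ∀ (x : Fin n → 𝓧) (y : Fin n → 𝓨),
      (∏ i ∈ s, eInd a b (x i) (y i)) * ∏ j, p (x j) (y j)
        = ∏ j, h j (x j) (y j) := by
    intro x y
    have h1 : ∏ j, h j (x j) (y j)
        = (∏ j ∈ s, h j (x j) (y j)) * ∏ j ∈ sᶜ, h j (x j) (y j) :=
      (Finset.prod_mul_prod_compl s _).symm
    have h2 : ∏ j ∈ s, h j (x j) (y j)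
        = (∏ j ∈ s, eInd a b (x j) (y j)) * ∏ j ∈ s, p (x j) (y j) := by
      rw [← Finset.prod_mul_distrib]
      exact Finset.prod_congr rfl fun j hj => by simp [hh, hj]
    have h3 : ∏ j ∈ sᶜ, h j (x j) (y j) = ∏ j ∈ sᶜ, p (x j) (y j) :=
      Finset.prod_congr rfl fun j hj => by
        simp only [Finset.mem_compl] at hj; simp [hh, hj]
    rw [h1, h2, h3, mul_assoc, Finset.prod_mul_prod_compl]
  rw [Finset.sum_congr rfl fun x (_ : x ∈ univ) =>
    Finset.sum_congr rfl fun y (_ : y ∈ univ) => key x y]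
  rw [expect_prod h]
  have : ∀ j, (∑ a', ∑ b', h j a' b') = if j ∈ s then p a b else 1 := by
    intro j
    by_cases hj : j ∈ s <;> simp [hh, hj, sum_eInd, hsum]
  rw [Finset.prod_congr rfl fun j _ => this j, Finset.prod_ite_mem, Finset.univ_inter,
    Finset.prod_const]

lemma cnt_cast_eInd {n : ℕ} (x : Fin n → 𝓧) (y : Fin n → 𝓨) (a : 𝓧) (b : 𝓨) :
    (cnt n x y a b : ℝ) = ∑ i, eInd a b (x i) (y i) := by
  rw [cnt, Finset.card_filter]
  push_cast
  simp [eInd]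

lemma swap_sum3 {n : ℕ} (F : (Fin n → 𝓧) → (Fin n → 𝓨) → Fin n → ℝ) :
    ∑ x : Fin n → 𝓧, ∑ y : Fin n → 𝓨, ∑ i, F x y i
      = ∑ i, ∑ x : Fin n → 𝓧, ∑ y : Fin n → 𝓨, F x y i := by
  rw [Finset.sum_congr rfl fun x (_ : x ∈ univ) => Finset.sum_comm .., Finset.sum_comm]

lemma S1 (hsum : ∑ a, ∑ b, p a b = 1) {n : ℕ} (a : 𝓧) (b : 𝓨) :
    ∑ x : Fin n → 𝓧, ∑ y : Fin n → 𝓨, (cnt n x y a b : ℝ) * ∏ j, p (x j) (y j)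
      = n * p a b := by
  have key : ∀ (x : Fin n → 𝓧) (y : Fin n → 𝓨),
      (cnt n x y a b : ℝ) * ∏ j, p (x j) (y j)
        = ∑ i, (∏ k ∈ ({i} : Finset (Fin n)), eInd a b (x k) (y k)) * ∏ j, p (x j) (y j) := by
    intro x y
    rw [cnt_cast_eInd, Finset.sum_mul]
    exact Finset.sum_congr rfl fun i _ => by rw [Finset.prod_singleton]
  rw [Finset.sum_congr rfl fun x (_ : x ∈ univ) =>
    Finset.sum_congr rfl fun y (_ : y ∈ univ) => key x y]
  rw [swap_sum3]
  rw [Finset.sum_congr rfl fun i (_ : i ∈ univ) => S_marked p hsum {i} a b]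
  simp [mul_comm]

lemma S2 (hsum : ∑ a, ∑ b, p a b = 1) {n : ℕ} (a : 𝓧) (b : 𝓨) :
    ∑ x : Fin n → 𝓧, ∑ y : Fin n → 𝓨, (cnt n x y a b : ℝ)^2 * ∏ j, p (x j) (y j)
      = n * p a b + ((n:ℝ)^2 - n) * (p a b)^2 := by
  have key : ∀ (x : Fin n → 𝓧) (y : Fin n → 𝓨),
      (cnt n x y a b : ℝ)^2 * ∏ j, p (x j) (y j)
        = ∑ i, ∑ i', (∏ k ∈ ({i, i'} : Finset (Fin n)), eInd a b (x k) (y k))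
            * ∏ j, p (x j) (y j) := by
    intro x y
    rw [sq, cnt_cast_eInd, Finset.sum_mul_sum, Finset.sum_mul]
    refine Finset.sum_congr rfl fun i _ => ?_
    rw [Finset.sum_mul]
    refine Finset.sum_congr rfl fun i' _ => ?_
    congr 1
    rcases eq_or_ne i i' with h | h
    · subst h
      rw [Finset.pair_eq_singleton, Finset.prod_singleton, eInd_mul_self]
    · rw [Finset.prod_pair h]
  rw [Finset.sum_congr rfl fun x (_ : x ∈ univ) =>
    Finset.sum_congr rfl fun y (_ : y ∈ univ) => key x y]
  rw [swap_sum3 (F := fun x y i => ∑ i', (∏ k ∈ ({i, i'} : Finset (Fin n)),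
      eInd a b (x k) (y k)) * ∏ j, p (x j) (y j))]
  have inner : ∀ i : Fin n, ∑ x : Fin n → 𝓧, ∑ y : Fin n → 𝓨,
      ∑ i', (∏ k ∈ ({i, i'} : Finset (Fin n)), eInd a b (x k) (y k)) * ∏ j, p (x j) (y j)
      = ∑ i' : Fin n, if i = i' then p a b else (p a b)^2 := by
    intro i
    rw [swap_sum3]
    refine Finset.sum_congr rfl fun i' _ => ?_
    rw [S_marked p hsum {i, i'} a b]
    rcases eq_or_ne i i' with h | h
    · subst h; rw [Finset.pair_eq_singleton, if_pos rfl, Finset.card_singleton, pow_one]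
    · rw [if_neg h, Finset.card_pair h]
  rw [Finset.sum_congr rfl fun i (_ : i ∈ univ) => inner i]
  have : ∀ i : Fin n, ∑ i' : Fin n, (if i = i' then p a b else (p a b)^2)
      = (p a b)^2 * n + (p a b - (p a b)^2) := by
    intro i
    have : ∀ i' : Fin n, (if i = i' then p a b else (p a b)^2)
        = (p a b)^2 + (if i = i' then p a b - (p a b)^2 else 0) := by
      intro i'; split <;> ring
    rw [Finset.sum_congr rfl fun i' _ => this i', Finset.sum_add_distrib,
      Finset.sum_ite_eq, Finset.sum_const]
    simp [mul_comm]
  rw [Finset.sum_congr rfl fun i (_ : i ∈ univ) => this i, Finset.sum_const]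
  simp only [Finset.card_univ, Fintype.card_fin, nsmul_eq_mul]
  ring

lemma cheb (hnn : ∀ a b, 0 ≤ p a b) (hsum : ∑ a, ∑ b, p a b = 1)
    {ε : ℝ} (hε : 0 < ε) {n : ℕ} (hn : 1 ≤ n) (a : 𝓧) (b : 𝓨) (hp : 0 < p a b) :
    ∑ x : Fin n → 𝓧, ∑ y : Fin n → 𝓨,
      (if ¬ (|emp n x y a b - p a b| ≤ ε * p a b) then ∏ j, p (x j) (y j) else 0)
      ≤ 1 / (n * ε^2 * p a b) := by
  set m := p a b with hm
  have hn' : (0:ℝ) < n := by exact_mod_cast hn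
  have hW : ∀ (x : Fin n → 𝓧) (y : Fin n → 𝓨), (0:ℝ) ≤ ∏ j, p (x j) (y j) :=
    fun x y => Finset.prod_nonneg fun j _ => hnn (x j) (y j)
  have hA : ∀ (x : Fin n → 𝓧) (y : Fin n → 𝓨),
      ((n:ℝ) * ε * m)^2 * (if ¬ (|emp n x y a b - p a b| ≤ ε * p a b)
          then ∏ j, p (x j) (y j) else 0)
      ≤ ((cnt n x y a b : ℝ) - n * m)^2 * ∏ j, p (x j) (y j) := by
    intro x y
    split
    · next hv =>
      push_neg at hv
      have hemp : emp n x y a b = (cnt n x y a b : ℝ) / n := rfl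
      rw [hemp] at hv
      have habs : (n:ℝ) * ε * m ≤ |(cnt n x y a b : ℝ) - n * m| := by
        have : (cnt n x y a b : ℝ) - n * m = n * ((cnt n x y a b : ℝ)/n - m) := by
          field_simp
        rw [this, abs_mul, abs_of_pos hn']
        have := le_of_lt hv
        nlinarith [this]
      have hsq : ((n:ℝ) * ε * m)^2 ≤ ((cnt n x y a b : ℝ) - n * m)^2 := by
        rw [← sq_abs ((cnt n x y a b : ℝ) - n * m)]
        apply pow_le_pow_left₀ (by positivity) habs
      exact mul_le_mul_of_nonneg_right hsq (hW x y)
    · rw [mul_zero]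
      exact mul_nonneg (sq_nonneg _) (hW x y)
  have hB : ∑ x : Fin n → 𝓧, ∑ y : Fin n → 𝓨,
      ((cnt n x y a b : ℝ) - n * m)^2 * ∏ j, p (x j) (y j) = n * m - n * m^2 := by
    have expand : ∀ (x : Fin n → 𝓧) (y : Fin n → 𝓨),
        ((cnt n x y a b : ℝ) - n * m)^2 * ∏ j, p (x j) (y j)
        = (cnt n x y a b : ℝ)^2 * ∏ j, p (x j) (y j)
          - (2 * n * m) * ((cnt n x y a b : ℝ) * ∏ j, p (x j) (y j))
          + (n:ℝ)^2 * m^2 * ∏ j, p (x j) (y j) := by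
      intro x y; ring
    rw [Finset.sum_congr rfl fun x (_ : x ∈ univ) =>
      Finset.sum_congr rfl fun y (_ : y ∈ univ) => expand x y]
    rw [Finset.sum_congr rfl fun x (_ : x ∈ univ) => Finset.sum_add_distrib,
      Finset.sum_add_distrib,
      Finset.sum_congr rfl fun x (_ : x ∈ univ) => Finset.sum_sub_distrib _ _,
      Finset.sum_sub_distrib]
    have c1 : ∑ x : Fin n → 𝓧, ∑ y : Fin n → 𝓨,
        (2 * (n:ℝ) * m) * ((cnt n x y a b : ℝ) * ∏ j, p (x j) (y j))
        = (2 * (n:ℝ) * m) * (n * m) := by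
      rw [Finset.sum_congr rfl fun x (_ : x ∈ univ) => (Finset.mul_sum ..).symm,
        ← Finset.mul_sum, S1 p hsum a b]
    have c2 : ∑ x : Fin n → 𝓧, ∑ y : Fin n → 𝓨,
        (n:ℝ)^2 * m^2 * ∏ j, p (x j) (y j) = (n:ℝ)^2 * m^2 := by
      rw [Finset.sum_congr rfl fun x (_ : x ∈ univ) => (Finset.mul_sum ..).symm,
        ← Finset.mul_sum]
      have : ∑ x : Fin n → 𝓧, ∑ y : Fin n → 𝓨, ∏ j, p (x j) (y j) = 1 := by
        rw [expect_prod (fun _ => p)]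
        simp [hsum]
      rw [this, mul_one]
    rw [c1, c2, S2 p hsum a b]
    ring
  have hsum_le : ((n:ℝ) * ε * m)^2 * (∑ x : Fin n → 𝓧, ∑ y : Fin n → 𝓨,
      (if ¬ (|emp n x y a b - p a b| ≤ ε * p a b) then ∏ j, p (x j) (y j) else 0))
      ≤ n * m - n * m^2 := by
    rw [← hB, Finset.mul_sum]
    rw [Finset.sum_congr rfl fun x (_ : x ∈ univ) => Finset.mul_sum ..]
    exact Finset.sum_le_sum fun x _ => Finset.sum_le_sum fun y _ => hA x y
  have hden : (0:ℝ) < ((n:ℝ) * ε * m)^2 := by positivity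
  have key : (∑ x : Fin n → 𝓧, ∑ y : Fin n → 𝓨,
      (if ¬ (|emp n x y a b - p a b| ≤ ε * p a b) then ∏ j, p (x j) (y j) else 0))
      ≤ (n * m - n * m^2) / ((n:ℝ) * ε * m)^2 := by
    rw [le_div_iff₀ hden]
    linarith [hsum_le]
  refine le_trans key ?_
  rw [div_le_div_iff₀ hden (by positivity)]
  have hm2 : (0:ℝ) ≤ n * m^2 := by positivity
  nlinarith [hm2, hn', hp, hε]

lemma badzero (hnn : ∀ a b, 0 ≤ p a b) {ε : ℝ} {n : ℕ} (a : 𝓧) (b : 𝓨) (hp : p a b = 0) :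
    ∑ x : Fin n → 𝓧, ∑ y : Fin n → 𝓨,
      (if ¬ (|emp n x y a b - p a b| ≤ ε * p a b) then ∏ j, p (x j) (y j) else 0) = 0 := by
  refine Finset.sum_eq_zero fun x _ => Finset.sum_eq_zero fun y _ => ?_
  split
  · next hv =>
    push_neg at hv
    rw [hp] at hv
    simp only [sub_zero, mul_zero] at hv
    have hcp : 0 < (Finset.univ.filter (fun i : Fin n => x i = a ∧ y i = b)).card := by
      by_contra hc
      push_neg at hc
      interval_cases h : (Finset.univ.filter (fun i : Fin n => x i = a ∧ y i = b)).card
      · rw [emp, h] at hv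
        simp at hv
    obtain ⟨i, hi⟩ := Finset.card_pos.mp hcp
    simp only [Finset.mem_filter] at hi
    refine Finset.prod_eq_zero (Finset.mem_univ i) ?_
    rw [hi.2.1, hi.2.2, hp]
  · rfl

lemma Pjoint_ge (hnn : ∀ a b, 0 ≤ p a b) (hsum : ∑ a, ∑ b, p a b = 1)
    {ε : ℝ} (hε : 0 < ε) :
    ∃ N : ℕ, 1 ≤ N ∧ ∀ n, N ≤ n →
      1 - ε ≤ ∑ x : Fin n → 𝓧, ∑ y : Fin n → 𝓨,
        (if JointlyTypical p ε n x y then ∏ j, p (x j) (y j) else 0) := by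
  classical
  set C : ℝ := ∑ a, ∑ b, (if p a b = 0 then 0 else 1 / (ε^2 * p a b)) with hC
  have hC0 : 0 ≤ C := by
    refine Finset.sum_nonneg fun a _ => Finset.sum_nonneg fun b _ => ?_
    split
    · exact le_refl 0
    · next h =>
      have : 0 < p a b := lt_of_le_of_ne (hnn a b) (Ne.symm h)
      positivity
  refine ⟨Nat.ceil (C / ε) + 1, by omega, fun n hn => ?_⟩
  have hn1 : 1 ≤ n := by omega
  have hn' : (0:ℝ) < n := by exact_mod_cast hn1
  have hW : ∀ (x : Fin n → 𝓧) (y : Fin n → 𝓨), (0:ℝ) ≤ ∏ j, p (x j) (y j) :=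
    fun x y => Finset.prod_nonneg fun j _ => hnn (x j) (y j)
  -- split off the atypical mass
  have hsplit : (∑ x : Fin n → 𝓧, ∑ y : Fin n → 𝓨,
        (if JointlyTypical p ε n x y then ∏ j, p (x j) (y j) else 0))
      + (∑ x : Fin n → 𝓧, ∑ y : Fin n → 𝓨,
        (if ¬ JointlyTypical p ε n x y then ∏ j, p (x j) (y j) else 0)) = 1 := by
    rw [← Finset.sum_add_distrib]
    rw [Finset.sum_congr rfl fun x (_ : x ∈ univ) => (Finset.sum_add_distrib).symm]
    have : ∀ (x : Fin n → 𝓧) (y : Fin n → 𝓨),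
        ((if JointlyTypical p ε n x y then ∏ j, p (x j) (y j) else 0)
          + (if ¬ JointlyTypical p ε n x y then ∏ j, p (x j) (y j) else 0))
        = ∏ j, p (x j) (y j) := by
      intro x y
      by_cases h : JointlyTypical p ε n x y <;> simp [h]
    rw [Finset.sum_congr rfl fun x (_ : x ∈ univ) =>
      Finset.sum_congr rfl fun y (_ : y ∈ univ) => this x y]
    rw [expect_prod (fun _ => p)]
    simp [hsum]
  -- union bound
  have hunion : (∑ x : Fin n → 𝓧, ∑ y : Fin n → 𝓨,
        (if ¬ JointlyTypical p ε n x y then ∏ j, p (x j) (y j) else 0))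
      ≤ ∑ a, ∑ b, ∑ x : Fin n → 𝓧, ∑ y : Fin n → 𝓨,
        (if ¬ (|emp n x y a b - p a b| ≤ ε * p a b) then ∏ j, p (x j) (y j) else 0) := by
    have term : ∀ (x : Fin n → 𝓧) (y : Fin n → 𝓨),
        (if ¬ JointlyTypical p ε n x y then ∏ j, p (x j) (y j) else 0)
        ≤ ∑ a, ∑ b,
          (if ¬ (|emp n x y a b - p a b| ≤ ε * p a b) then ∏ j, p (x j) (y j) else 0) := by
      intro x y
      have hnonneg : ∀ a b, (0:ℝ) ≤ (if ¬ (|emp n x y a b - p a b| ≤ ε * p a b)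
          then ∏ j, p (x j) (y j) else 0) := by
        intro a b; split
        · exact hW x y
        · exact le_refl 0
      split
      · next h =>
        rw [JointlyTypical] at h
        push_neg at h
        obtain ⟨a0, b0, hab⟩ := h
        calc ∏ j, p (x j) (y j)
            = (if ¬ (|emp n x y a0 b0 - p a0 b0| ≤ ε * p a0 b0)
                then ∏ j, p (x j) (y j) else 0) := by rw [if_pos (not_le.mpr hab)]
          _ ≤ ∑ b, (if ¬ (|emp n x y a0 b - p a0 b| ≤ ε * p a0 b)
                then ∏ j, p (x j) (y j) else 0) :=
              Finset.single_le_sum (fun b _ => hnonneg a0 b) (Finset.mem_univ b0)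
          _ ≤ _ := Finset.single_le_sum
              (fun a _ => Finset.sum_nonneg fun b _ => hnonneg a b) (Finset.mem_univ a0)
      · exact Finset.sum_nonneg fun a _ => Finset.sum_nonneg fun b _ => hnonneg a b
    calc ∑ x : Fin n → 𝓧, ∑ y : Fin n → 𝓨,
          (if ¬ JointlyTypical p ε n x y then ∏ j, p (x j) (y j) else 0)
        ≤ ∑ x : Fin n → 𝓧, ∑ y : Fin n → 𝓨, ∑ a, ∑ b,
          (if ¬ (|emp n x y a b - p a b| ≤ ε * p a b) then ∏ j, p (x j) (y j) else 0) :=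
          Finset.sum_le_sum fun x _ => Finset.sum_le_sum fun y _ => term x y
      _ = _ := by
          rw [Finset.sum_congr rfl fun x (_ : x ∈ univ) => Finset.sum_comm .., Finset.sum_comm]
          refine Finset.sum_congr rfl fun a _ => ?_
          rw [Finset.sum_congr rfl fun x (_ : x ∈ univ) => Finset.sum_comm .., Finset.sum_comm]
  -- bound each bad event
  have hper : ∀ a b, (∑ x : Fin n → 𝓧, ∑ y : Fin n → 𝓨,
        (if ¬ (|emp n x y a b - p a b| ≤ ε * p a b) then ∏ j, p (x j) (y j) else 0))
      ≤ (if p a b = 0 then 0 else 1 / (ε^2 * p a b)) / n := by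
    intro a b
    by_cases h : p a b = 0
    · rw [if_pos h, badzero p hnn a b h, zero_div]
    · rw [if_neg h]
      have hp : 0 < p a b := lt_of_le_of_ne (hnn a b) (Ne.symm h)
      refine le_trans (cheb p hnn hsum hε hn1 a b hp) ?_
      rw [div_div]
      rw [one_div, one_div]
      apply le_of_eq
      congr 1
      ring
  have hCn : ∑ a, ∑ b, (if p a b = 0 then 0 else 1 / (ε^2 * p a b)) / (n:ℝ) = C / n := by
    rw [hC, Finset.sum_div]
    exact Finset.sum_congr rfl fun a _ => (Finset.sum_div ..).symm
  have hbad : (∑ x : Fin n → 𝓧, ∑ y : Fin n → 𝓨,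
        (if ¬ JointlyTypical p ε n x y then ∏ j, p (x j) (y j) else 0)) ≤ C / n := by
    refine le_trans hunion ?_
    rw [← hCn]
    exact Finset.sum_le_sum fun a _ => Finset.sum_le_sum fun b _ => hper a b
  have hCne : C / n ≤ ε := by
    rw [div_le_iff₀ hn']
    have h1 : C / ε ≤ (n:ℝ) := by
      refine le_trans (Nat.le_ceil _) ?_
      have : ((Nat.ceil (C / ε) : ℕ) : ℝ) ≤ (n:ℝ) := by
        exact_mod_cast le_trans (Nat.le_succ _) hn
      exact this
    calc C = (C / ε) * ε := by field_simp
      _ ≤ (n:ℝ) * ε := mul_le_mul_of_nonneg_right h1 (le_of_lt hε)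
      _ = ε * n := mul_comm _ _
  linarith [hsplit, hbad, hCne]

variable (hnn : ∀ a b, 0 ≤ p a b) (hsum : ∑ a, ∑ b, p a b = 1)
include hnn

lemma pX_pos {a b} (h : 0 < p a b) : 0 < pX p a :=
  lt_of_lt_of_le h (Finset.single_le_sum (fun b _ => hnn a b) (mem_univ b))

lemma pY_pos {a b} (h : 0 < p a b) : 0 < pY p b :=
  lt_of_lt_of_le h (Finset.single_le_sum (fun a _ => hnn a b) (mem_univ a))

include hsum

lemma sumpY : ∑ b, pY p b = 1 := by
  rw [← hsum]; exact Finset.sum_comm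

lemma pY_le_one (b : 𝓨) : pY p b ≤ 1 := by
  rw [← sumpY p hnn hsum]
  exact Finset.single_le_sum (fun b' _ => Finset.sum_nonneg fun a _ => hnn a b') (mem_univ b)

omit hsum

lemma MI_eq : MI p = HY p - Hc p := by
  have key : ∀ a b, p a b * Real.logb 2 (p a b / (pX p a * pY p b))
      = p a b * Real.logb 2 (p a b / pX p a) - p a b * Real.logb 2 (pY p b) := by
    intro a b
    rcases eq_or_lt_of_le (hnn a b) with h | h
    · simp [← h]
    · have hx := pX_pos p hnn h
      have hy := pY_pos p hnn h
      rw [← mul_sub]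
      congr 1
      rw [div_mul_eq_div_div, Real.logb_div (by positivity) (ne_of_gt hy)]
  rw [MI, Hc, HY]
  calc ∑ a, ∑ b, p a b * Real.logb 2 (p a b / ((∑ b', p a b') * (∑ a', p a' b)))
      = ∑ a, ∑ b, (p a b * Real.logb 2 (p a b / pX p a) - p a b * Real.logb 2 (pY p b)) := by
        exact Finset.sum_congr rfl fun a _ => Finset.sum_congr rfl fun b _ => key a b
    _ = (∑ a, ∑ b, p a b * Real.logb 2 (p a b / pX p a))
        - ∑ a, ∑ b, p a b * Real.logb 2 (pY p b) := by
        rw [← Finset.sum_sub_distrib]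
        exact Finset.sum_congr rfl fun a _ => Finset.sum_sub_distrib _ _
    _ = (∑ a, ∑ b, p a b * Real.logb 2 (p a b / pX p a))
        - ∑ b, (∑ a, p a b) * Real.logb 2 (∑ a, p a b) := by
        congr 1
        rw [Finset.sum_comm]
        exact Finset.sum_congr rfl fun b _ => by rw [Finset.sum_mul]; rfl
    _ = _ := by ring

include hsum

lemma sumQ : ∑ a, ∑ b, pX p a * pY p b = 1 := by
  have : ∀ a, ∑ b, pX p a * pY p b = pX p a := by
    intro a
    rw [← Finset.mul_sum, sumpY p hnn hsum, mul_one]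
  rw [Finset.sum_congr rfl fun a _ => this a]
  exact hsum

lemma MI_nonneg : 0 ≤ MI p := by
  have key : ∀ a b, p a b * Real.log (p a b / (pX p a * pY p b))
      ≥ p a b - pX p a * pY p b := by
    intro a b
    rcases eq_or_lt_of_le (hnn a b) with h | h
    · have hq : 0 ≤ pX p a * pY p b :=
        mul_nonneg (Finset.sum_nonneg fun b' _ => hnn a b')
          (Finset.sum_nonneg fun a' _ => hnn a' b)
      simp [← h]; linarith
    · have hx := pX_pos p hnn h
      have hy := pY_pos p hnn h
      have hq : 0 < pX p a * pY p b := mul_pos hx hy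
      have hlog : Real.log ((pX p a * pY p b) / p a b) ≤ (pX p a * pY p b) / p a b - 1 :=
        Real.log_le_sub_one_of_pos (by positivity)
      have : Real.log (p a b / (pX p a * pY p b))
          = - Real.log ((pX p a * pY p b) / p a b) := by
        rw [← Real.log_inv]; congr 1; field_simp
      rw [this]
      have h2 : p a b * Real.log ((pX p a * pY p b) / p a b) ≤ pX p a * pY p b - p a b := by
        have := mul_le_mul_of_nonneg_left hlog (le_of_lt h)
        calc p a b * Real.log ((pX p a * pY p b) / p a b)
            ≤ p a b * ((pX p a * pY p b) / p a b - 1) := this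
          _ = pX p a * pY p b - p a b := by field_simp
      linarith
  have hsumineq : 0 ≤ ∑ a, ∑ b, p a b * Real.log (p a b / (pX p a * pY p b)) := by
    have : ∑ a, ∑ b, (p a b - pX p a * pY p b) = 0 := by
      rw [Finset.sum_congr rfl fun a (_ : a ∈ univ) => Finset.sum_sub_distrib _ _,
        Finset.sum_sub_distrib, hsum, sumQ p hnn hsum]
      ring
    calc (0:ℝ) = ∑ a, ∑ b, (p a b - pX p a * pY p b) := this.symm
      _ ≤ ∑ a, ∑ b, p a b * Real.log (p a b / (pX p a * pY p b)) :=
        Finset.sum_le_sum fun a _ => Finset.sum_le_sum fun b _ => key a b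
  have hMI : MI p = (∑ a, ∑ b, p a b * Real.log (p a b / (pX p a * pY p b))) / Real.log 2 := by
    rw [MI, Finset.sum_div]
    refine Finset.sum_congr rfl fun a _ => ?_
    rw [Finset.sum_div]
    refine Finset.sum_congr rfl fun b _ => ?_
    rw [Real.logb, mul_div_assoc]
    rfl
  rw [hMI]
  positivity

lemma Hc_le_HY : Hc p ≤ HY p := by
  have := MI_nonneg p hnn hsum
  rw [MI_eq p hnn] at this
  linarith

omit hnn hsum

lemma emp_eq (n : ℕ) (x : Fin n → 𝓧) (y : Fin n → 𝓨) (a : 𝓧) (b : 𝓨) :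
    emp n x y a b = (cnt n x y a b : ℝ) / n := rfl

variable {p} {ε : ℝ} {n : ℕ} {x : Fin n → 𝓧} {y : Fin n → 𝓨}

lemma typ_cnt_le (hT : JointlyTypical p ε n x y) (hn : 1 ≤ n) (a : 𝓧) (b : 𝓨) :
    (cnt n x y a b : ℝ) ≤ n * ((1 + ε) * p a b) := by
  have h := abs_le.mp (hT a b)
  have hn' : (0:ℝ) < n := by exact_mod_cast hn
  rw [emp_eq] at h
  have h2 := h.2
  rw [div_sub' (ne_of_gt hn'), div_le_iff₀ hn'] at h2
  nlinarith [h2]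

lemma typ_cnt_ge (hT : JointlyTypical p ε n x y) (hn : 1 ≤ n) (a : 𝓧) (b : 𝓨) :
    n * ((1 - ε) * p a b) ≤ (cnt n x y a b : ℝ) := by
  have h := abs_le.mp (hT a b)
  have hn' : (0:ℝ) < n := by exact_mod_cast hn
  rw [emp_eq] at h
  have h1 := h.1
  have h1' : (1 - ε) * p a b ≤ (cnt n x y a b : ℝ) / n := by linarith
  rw [le_div_iff₀ hn'] at h1'
  linarith [h1']

lemma typ_cnt_zero (hT : JointlyTypical p ε n x y) (hn : 1 ≤ n) {a : 𝓧} {b : 𝓨}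
    (hp : p a b = 0) : cnt n x y a b = 0 := by
  have h := hT a b
  rw [hp, emp_eq] at h
  simp only [mul_zero, sub_zero] at h
  have hn' : (0:ℝ) < n := by exact_mod_cast hn
  have habs : (cnt n x y a b : ℝ) / n ≤ 0 := le_trans (le_abs_self _) h
  have : (cnt n x y a b : ℝ) / n = 0 := le_antisymm habs (by positivity)
  have := (div_eq_zero_iff.mp this).resolve_right (ne_of_gt hn')
  exact_mod_cast this

lemma typ_p_pos (hnn : ∀ a b, 0 ≤ p a b) (hT : JointlyTypical p ε n x y) (hn : 1 ≤ n)
    (i : Fin n) : 0 < p (x i) (y i) := by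
  rcases eq_or_lt_of_le (hnn (x i) (y i)) with h | h
  · exfalso
    have hz := typ_cnt_zero hT hn h.symm
    have : i ∈ Finset.univ.filter (fun j : Fin n => x j = x i ∧ y j = y i) := by simp
    have := Finset.card_pos.mpr ⟨i, this⟩
    rw [cnt] at hz; omega
  · exact h


lemma sumW (hsum : ∑ a, ∑ b, p a b = 1) :
    ∑ x : Fin n → 𝓧, ∑ y : Fin n → 𝓨, ∏ i, p (x i) (y i) = 1 := by
  rw [expect_prod (fun _ => p)]
  simp [hsum]

section KeyBound

variable (hnn : ∀ a b, 0 ≤ p a b) (hsum : ∑ a, ∑ b, p a b = 1)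
  (hε : 0 ≤ ε) (hn : 1 ≤ n) (hT : JointlyTypical p ε n x y)
include hnn hsum hε hn hT

lemma typ_term_le (a : 𝓧) (b : 𝓨) :
    (cnt n x y a b : ℝ) * (Real.logb 2 (pX p a * pY p b) - Real.logb 2 (p a b))
      ≤ n * (-(1 + ε) * s1 p a b + (1 - ε) * s2 p a b) := by
  rcases eq_or_lt_of_le (hnn a b) with h | h
  · rw [typ_cnt_zero hT hn h.symm, s1, s2, ← h]; simp
  · have hx := pX_pos p hnn h
    have hy := pY_pos p hnn h
    have hsplit : Real.logb 2 (pX p a * pY p b) - Real.logb 2 (p a b)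
        = -(Real.logb 2 (p a b / pX p a)) + Real.logb 2 (pY p b) := by
      rw [Real.logb_mul (ne_of_gt hx) (ne_of_gt hy),
        Real.logb_div (ne_of_gt h) (ne_of_gt hx)]
      ring
    rw [hsplit, s1, s2]
    have hL1 : Real.logb 2 (p a b / pX p a) ≤ 0 :=
      Real.logb_nonpos one_lt_two (by positivity)
        (by rw [div_le_one hx]
            exact Finset.single_le_sum (fun b' _ => hnn a b') (mem_univ b))
    have hL2 : Real.logb 2 (pY p b) ≤ 0 :=
      Real.logb_nonpos one_lt_two (le_of_lt hy) (pY_le_one p hnn hsum b)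
    have hc0 : (0:ℝ) ≤ (cnt n x y a b : ℝ) := Nat.cast_nonneg _
    nlinarith [mul_le_mul_of_nonneg_right (typ_cnt_le hT hn a b) (neg_nonneg.mpr hL1),
      mul_le_mul_of_nonneg_left hL2 hc0,
      mul_le_mul_of_nonneg_right (typ_cnt_ge hT hn a b) (neg_nonneg.mpr hL2)]

lemma typ_term_ge (a : 𝓧) (b : 𝓨) :
    n * (-(1 - ε) * s1 p a b + (1 + ε) * s2 p a b)
      ≤ (cnt n x y a b : ℝ) * (Real.logb 2 (pX p a * pY p b) - Real.logb 2 (p a b)) := by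
  rcases eq_or_lt_of_le (hnn a b) with h | h
  · rw [typ_cnt_zero hT hn h.symm, s1, s2, ← h]; simp
  · have hx := pX_pos p hnn h
    have hy := pY_pos p hnn h
    have hsplit : Real.logb 2 (pX p a * pY p b) - Real.logb 2 (p a b)
        = -(Real.logb 2 (p a b / pX p a)) + Real.logb 2 (pY p b) := by
      rw [Real.logb_mul (ne_of_gt hx) (ne_of_gt hy),
        Real.logb_div (ne_of_gt h) (ne_of_gt hx)]
      ring
    rw [hsplit, s1, s2]
    have hL1 : Real.logb 2 (p a b / pX p a) ≤ 0 :=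
      Real.logb_nonpos one_lt_two (by positivity)
        (by rw [div_le_one hx]
            exact Finset.single_le_sum (fun b' _ => hnn a b') (mem_univ b))
    have hL2 : Real.logb 2 (pY p b) ≤ 0 :=
      Real.logb_nonpos one_lt_two (le_of_lt hy) (pY_le_one p hnn hsum b)
    have hc0 : (0:ℝ) ≤ (cnt n x y a b : ℝ) := Nat.cast_nonneg _
    nlinarith [mul_le_mul_of_nonneg_right (typ_cnt_ge hT hn a b) (neg_nonneg.mpr hL1),
      mul_le_mul_of_nonneg_left hL2 hc0,
      mul_le_mul_of_nonneg_right (typ_cnt_le hT hn a b) (neg_nonneg.mpr hL2)]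

lemma typ_logsum :
    (∑ i, Real.logb 2 (p (x i) (y i))) - n * (MI p + 2 * ε * HY p)
      ≤ ∑ i, Real.logb 2 (pX p (x i) * pY p (y i))
    ∧ (∑ i, Real.logb 2 (pX p (x i) * pY p (y i)))
      ≤ (∑ i, Real.logb 2 (p (x i) (y i))) - n * (MI p - 2 * ε * HY p) := by
  have hD : (∑ i, Real.logb 2 (pX p (x i) * pY p (y i))) - ∑ i, Real.logb 2 (p (x i) (y i))
      = ∑ a, ∑ b, (cnt n x y a b : ℝ)
          * (Real.logb 2 (pX p a * pY p b) - Real.logb 2 (p a b)) := by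
    rw [← Finset.sum_sub_distrib]
    exact count_sum x y (fun a b => Real.logb 2 (pX p a * pY p b) - Real.logb 2 (p a b))
  have hMI := MI_eq p hnn
  have hHc := Hc_le_HY p hnn hsum
  have hn0 : (0:ℝ) ≤ (n:ℝ) := Nat.cast_nonneg n
  have hsum1 := sum_s1 p
  have hsum2 := sum_s2 p
  have key : ∀ c d : ℝ, ∑ a, ∑ b, (n:ℝ) * (c * s1 p a b + d * s2 p a b)
      = n * (c * (-Hc p) + d * (-HY p)) := by
    intro c d
    have step : ∀ a, ∑ b, (n:ℝ) * (c * s1 p a b + d * s2 p a b)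
        = (n:ℝ) * c * (∑ b, s1 p a b) + (n:ℝ) * d * (∑ b, s2 p a b) := by
      intro a
      rw [Finset.mul_sum, Finset.mul_sum, ← Finset.sum_add_distrib]
      exact Finset.sum_congr rfl fun b _ => by ring
    rw [Finset.sum_congr rfl fun a (_ : a ∈ univ) => step a, Finset.sum_add_distrib,
      ← Finset.mul_sum, ← Finset.mul_sum, ← hsum1, ← hsum2]
    ring
  constructor
  · have hle : ∑ a, ∑ b, (n:ℝ) * (-(1 - ε) * s1 p a b + (1 + ε) * s2 p a b)
        ≤ ∑ a, ∑ b, (cnt n x y a b : ℝ)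
            * (Real.logb 2 (pX p a * pY p b) - Real.logb 2 (p a b)) :=
      Finset.sum_le_sum fun a _ => Finset.sum_le_sum fun b _ =>
        typ_term_ge hnn hsum hε hn hT a b
    rw [key] at hle
    rw [← hD] at hle
    nlinarith [hle, mul_nonneg (mul_nonneg hn0 hε) (sub_nonneg.mpr hHc)]
  · have hle : ∑ a, ∑ b, (cnt n x y a b : ℝ)
          * (Real.logb 2 (pX p a * pY p b) - Real.logb 2 (p a b))
        ≤ ∑ a, ∑ b, (n:ℝ) * (-(1 + ε) * s1 p a b + (1 - ε) * s2 p a b) :=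
      Finset.sum_le_sum fun a _ => Finset.sum_le_sum fun b _ =>
        typ_term_le hnn hsum hε hn hT a b
    rw [key] at hle
    rw [← hD] at hle
    nlinarith [hle, mul_nonneg (mul_nonneg hn0 hε) (sub_nonneg.mpr hHc)]

lemma typ_prod :
    (2:ℝ) ^ (-(n:ℝ) * (MI p + 2 * ε * HY p)) * ∏ i, p (x i) (y i)
      ≤ ∏ i, pX p (x i) * pY p (y i)
    ∧ ∏ i, pX p (x i) * pY p (y i)
      ≤ (2:ℝ) ^ (-(n:ℝ) * (MI p - 2 * ε * HY p)) * ∏ i, p (x i) (y i) := by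
  have hp : ∀ i, 0 < p (x i) (y i) := typ_p_pos hnn hT hn
  have hq : ∀ i, 0 < pX p (x i) * pY p (y i) :=
    fun i => mul_pos (pX_pos p hnn (hp i)) (pY_pos p hnn (hp i))
  have hprodq : ∏ i, pX p (x i) * pY p (y i)
      = (2:ℝ) ^ (∑ i, Real.logb 2 (pX p (x i) * pY p (y i))) := by
    rw [Real.rpow_sum_of_pos two_pos]
    exact Finset.prod_congr rfl fun i _ =>
      (Real.rpow_logb two_pos (by norm_num) (hq i)).symm
  have hprodp : ∏ i, p (x i) (y i)
      = (2:ℝ) ^ (∑ i, Real.logb 2 (p (x i) (y i))) := by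
    rw [Real.rpow_sum_of_pos two_pos]
    exact Finset.prod_congr rfl fun i _ =>
      (Real.rpow_logb two_pos (by norm_num) (hp i)).symm
  obtain ⟨hlo, hup⟩ := typ_logsum hnn hsum hε hn hT
  constructor
  · rw [hprodq, hprodp, ← Real.rpow_add two_pos]
    apply (Real.rpow_le_rpow_left_iff one_lt_two).mpr
    linarith
  · rw [hprodq, hprodp, ← Real.rpow_add two_pos]
    apply (Real.rpow_le_rpow_left_iff one_lt_two).mpr
    linarith

omit hT

lemma Pindep_le : Pindep p ε n ≤ (2:ℝ) ^ (-(n:ℝ) * (MI p - 2 * ε * HY p)) := by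
  rw [Pindep]
  have key : ∀ x : Fin n → 𝓧, ∀ y : Fin n → 𝓨,
      (if JointlyTypical p ε n x y then
        ∏ i, (∑ b, p (x i) b) * (∑ a, p a (y i)) else 0)
      ≤ (2:ℝ) ^ (-(n:ℝ) * (MI p - 2 * ε * HY p)) * ∏ i, p (x i) (y i) := by
    intro x y
    split
    · next hT =>
      exact (typ_prod hnn hsum hε hn hT).2
    · next hT =>
      have : (0:ℝ) ≤ ∏ i, p (x i) (y i) :=
        Finset.prod_nonneg fun i _ => hnn (x i) (y i)
      positivity
  calc ∑ x : Fin n → 𝓧, ∑ y : Fin n → 𝓨, (if JointlyTypical p ε n x y then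
          ∏ i, (∑ b, p (x i) b) * (∑ a, p a (y i)) else 0)
      ≤ ∑ x : Fin n → 𝓧, ∑ y : Fin n → 𝓨,
          (2:ℝ) ^ (-(n:ℝ) * (MI p - 2 * ε * HY p)) * ∏ i, p (x i) (y i) :=
        Finset.sum_le_sum fun x _ => Finset.sum_le_sum fun y _ => key x y
    _ = (2:ℝ) ^ (-(n:ℝ) * (MI p - 2 * ε * HY p)) := by
        rw [Finset.sum_congr rfl fun x (_ : x ∈ univ) => (Finset.mul_sum ..).symm,
          ← Finset.mul_sum, sumW hsum, mul_one]

lemma Pindep_ge :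
    (2:ℝ) ^ (-(n:ℝ) * (MI p + 2 * ε * HY p)) * Pjoint p ε n ≤ Pindep p ε n := by
  rw [Pindep, Pjoint, Finset.mul_sum]
  rw [Finset.sum_congr rfl fun x (_ : x ∈ univ) => Finset.mul_sum ..]
  refine Finset.sum_le_sum fun x _ => Finset.sum_le_sum fun y _ => ?_
  rw [mul_ite, mul_zero]
  split
  · next hT =>
    exact (typ_prod hnn hsum hε hn hT).1
  · exact le_refl 0

end KeyBound

end Stmt16Aux

/-- Lemma 9. -/
theorem stmt16
    (hnn : ∀ a b, 0 ≤ p a b) (hsum : ∑ a, ∑ b, p a b = 1) :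
    ∃ δ : ℝ → ℝ,
      Filter.Tendsto δ (nhdsWithin 0 (Set.Ioi 0)) (nhds 0) ∧
      ∀ ε : ℝ, 0 < ε → ∃ N : ℕ, ∀ n ≥ N,
        (1 - δ ε) * (2 : ℝ) ^ (-(n : ℝ) * (MI p + 2 * ε * HY p)) ≤ Pindep p ε n ∧
        Pindep p ε n ≤ (2 : ℝ) ^ (-(n : ℝ) * (MI p - 2 * ε * HY p)) := by
  refine ⟨fun t => t, Filter.tendsto_id.mono_left nhdsWithin_le_nhds, ?_⟩
  intro ε hε
  obtain ⟨N, hN1, hNp⟩ := Stmt16Aux.Pjoint_ge p hnn hsum hε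
  refine ⟨N, fun n hn => ?_⟩
  have hn1 : 1 ≤ n := le_trans hN1 hn
  constructor
  · have hPj : 1 - ε ≤ Stmt16Aux.Pjoint p ε n := hNp n hn
    have h1 := Stmt16Aux.Pindep_ge hnn hsum (le_of_lt hε) hn1
    have hpow : (0:ℝ) < (2:ℝ) ^ (-(n:ℝ) * (MI p + 2 * ε * HY p)) :=
      Real.rpow_pos_of_pos two_pos _
    calc (1 - ε) * (2:ℝ) ^ (-(n:ℝ) * (MI p + 2 * ε * HY p))
        ≤ (2:ℝ) ^ (-(n:ℝ) * (MI p + 2 * ε * HY p)) * Stmt16Aux.Pjoint p ε n := by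
          rw [mul_comm]
          exact mul_le_mul_of_nonneg_left hPj (le_of_lt hpow)
      _ ≤ Pindep p ε n := h1
  · exact Stmt16Aux.Pindep_le hnn hsum (le_of_lt hε) hn1

end Typicality
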